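/- Let p be a strictly positive N×M matrix of prices, q a quantity matrix, and β_1,…,β_M strictly positive constants. Consider the generalized Geary–Khamis system: 1/PPP_j = Σ_{n=1}^N (p_{nj} q_{nj} / Σ_{n'=1}^N p_{n'j} q_{n'j}) · (P_n / p_{nj}) for j = 1,…,M and P_i = Σ_{m=1}^M (β_m q_{im} / Σ_{m'=1}^M β_{m'} q_{im'}) · (p_{im} / PPP_m) for i = 1,…,N. Then a strictly positive solution (PPP, P), unique up to the rescaling (PPP, P) ↦ (γ·PPP, (1/γ)·P) for γ > 0, exists if and only if the quantity matrix q is connected. -/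

import Mathlib

open Finset

lemma stoch_pos {M : ℕ} (T : Fin M → Fin M → ℝ)
    (hT0 : ∀ j m, 0 ≤ T j m)
    (hirr : ∀ J : Finset (Fin M), J.Nonempty → J ≠ Finset.univ →
      ∃ j ∈ J, ∃ l, l ∉ J ∧ 0 < T j l)
    (z : Fin M → ℝ) (hz0 : ∀ m, 0 ≤ z m)
    (hz : ∀ j, ∑ m, T j m * z m = z j)
    (hzne : ∃ m, z m ≠ 0) : ∀ m, 0 < z m := by
  classical
  by_contra h
  push_neg at h
  obtain ⟨m0, hm0⟩ := h
  have hm0' : z m0 = 0 := le_antisymm hm0 (hz0 m0)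
  set Z : Finset (Fin M) := Finset.univ.filter (fun m => z m = 0) with hZ
  have hZne : Z.Nonempty := ⟨m0, by simp [hZ, hm0']⟩
  have hZuniv : Z ≠ Finset.univ := by
    obtain ⟨m1, hm1⟩ := hzne
    intro hcon
    have : m1 ∈ Z := hcon ▸ mem_univ m1
    simp only [hZ, mem_filter] at this
    exact hm1 this.2
  obtain ⟨j, hjZ, l, hlZ, hTl⟩ := hirr Z hZne hZuniv
  have hzj : z j = 0 := by
    simp only [hZ, mem_filter] at hjZ; exact hjZ.2
  have hzl : 0 < z l := by
    rcases (hz0 l).lt_or_eq with h | h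
    · exact h
    · exact absurd (by simp [hZ, ← h]) hlZ
  have hpos : 0 < ∑ m, T j m * z m := by
    apply Finset.sum_pos' (fun m _ => mul_nonneg (hT0 j m) (hz0 m))
    exact ⟨l, mem_univ l, mul_pos hTl hzl⟩
  rw [hz j, hzj] at hpos
  exact lt_irrefl 0 hpos

lemma stoch_unique {M : ℕ} (hM : 0 < M) (T : Fin M → Fin M → ℝ)
    (hT0 : ∀ j m, 0 ≤ T j m)
    (hirr : ∀ J : Finset (Fin M), J.Nonempty → J ≠ Finset.univ →
      ∃ j ∈ J, ∃ l, l ∉ J ∧ 0 < T j l)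
    (z z' : Fin M → ℝ) (hzpos : ∀ m, 0 < z m) (hz'pos : ∀ m, 0 < z' m)
    (hz : ∀ j, ∑ m, T j m * z m = z j)
    (hz' : ∀ j, ∑ m, T j m * z' m = z' j) :
    ∃ c : ℝ, 0 < c ∧ ∀ m, z' m = c * z m := by
  classical
  obtain ⟨m0, _, hm0⟩ := Finset.exists_min_image Finset.univ (fun m => z' m / z m)
    ⟨⟨0, hM⟩, mem_univ _⟩
  set c := z' m0 / z m0 with hc
  refine ⟨c, div_pos (hz'pos m0) (hzpos m0), ?_⟩
  set w : Fin M → ℝ := fun m => z' m - c * z m with hwdef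
  have hw0 : ∀ m, 0 ≤ w m := by
    intro m
    have h1 : c ≤ z' m / z m := hm0 m (mem_univ m)
    have := (le_div_iff₀ (hzpos m)).mp h1
    simp only [hwdef]; linarith
  have hwm0 : w m0 = 0 := by
    simp only [hwdef, hc]
    rw [div_mul_cancel₀ _ (hzpos m0).ne', sub_self]
  have hweig : ∀ j, ∑ m, T j m * w m = w j := by
    intro j
    simp only [hwdef, mul_sub, Finset.sum_sub_distrib]
    rw [hz' j]
    congr 1
    rw [show (∑ x, T j x * (c * z x)) = c * ∑ x, T j x * z x from by
      rw [Finset.mul_sum]; exact Finset.sum_congr rfl fun x _ => by ring, hz j]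
  by_cases hex : ∃ m, w m ≠ 0
  · have := stoch_pos T hT0 hirr w hw0 hweig hex m0
    rw [hwm0] at this
    exact absurd this (lt_irrefl 0)
  · push_neg at hex
    intro m
    have := hex m
    simp only [hwdef] at this
    linarith

lemma stoch_exists {M : ℕ} (hM : 0 < M) (T : Fin M → Fin M → ℝ)
    (hT0 : ∀ j m, 0 ≤ T j m)
    (hcol : ∀ m, ∑ j, T j m = 1)
    (hirr : ∀ J : Finset (Fin M), J.Nonempty → J ≠ Finset.univ →
      ∃ j ∈ J, ∃ l, l ∉ J ∧ 0 < T j l) :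
    ∃ z : Fin M → ℝ, (∀ m, 0 < z m) ∧ ∀ j, ∑ m, T j m * z m = z j := by
  classical
  set B : Matrix (Fin M) (Fin M) ℝ := Matrix.of T - 1 with hB
  have hdetT : B.transpose.det = 0 := by
    rw [← Matrix.exists_mulVec_eq_zero_iff]
    refine ⟨fun _ => 1, ?_, ?_⟩
    · intro h
      have := congrFun h ⟨0, hM⟩
      simp at this
    · funext j
      simp only [Matrix.mulVec, dotProduct, hB, Matrix.transpose_apply,
        Matrix.sub_apply, Matrix.of_apply, mul_one, Finset.sum_sub_distrib, hcol j,
        Matrix.one_apply, Pi.zero_apply]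
      simp
  have hdet : B.det = 0 := by rw [← Matrix.det_transpose]; exact hdetT
  obtain ⟨v, hvne, hv⟩ := Matrix.exists_mulVec_eq_zero_iff.mpr hdet
  have hTv : ∀ j, ∑ m, T j m * v m = v j := by
    intro j
    have h := congrFun hv j
    simp only [hB, Matrix.mulVec, dotProduct, Matrix.of_apply, Matrix.sub_apply,
      Matrix.one_apply, Pi.zero_apply, sub_mul, ite_mul, one_mul, zero_mul,
      Finset.sum_sub_distrib, Finset.sum_ite_eq, mem_univ, if_true] at h
    linarith
  set z : Fin M → ℝ := fun m => |v m| with hzdef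
  have hle : ∀ j, z j ≤ ∑ m, T j m * z m := by
    intro j
    calc |v j| = |∑ m, T j m * v m| := by rw [hTv j]
    _ ≤ ∑ m, |T j m * v m| := Finset.abs_sum_le_sum_abs _ _
    _ = ∑ m, T j m * z m := by
        refine Finset.sum_congr rfl fun m _ => ?_
        rw [abs_mul, abs_of_nonneg (hT0 j m)]
  have hsum : (∑ j, z j) = ∑ j, (∑ m, T j m * z m) := by
    rw [Finset.sum_comm]
    refine (Finset.sum_congr rfl fun m _ => ?_).symm
    rw [← Finset.sum_mul, hcol m, one_mul]
  have heq : ∀ j, ∑ m, T j m * z m = z j := by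
    intro j
    exact ((Finset.sum_eq_sum_iff_of_le (fun i _ => hle i)).mp hsum j (mem_univ j)).symm
  have hzne : ∃ m, z m ≠ 0 := by
    by_contra hcon
    push_neg at hcon
    apply hvne
    funext m
    have := hcon m
    simpa [hzdef, abs_eq_zero] using this
  exact ⟨z, stoch_pos T hT0 hirr z (fun m => abs_nonneg _) heq hzne, heq⟩

open Finset

noncomputable def Ax {N M : ℕ} (p q : Fin N → Fin M → ℝ) (β : Fin M → ℝ) :
    Fin M → Fin M → ℝ :=
  fun j m => ∑ n, β j * q n j * (β m * q n m * p n m) / (∑ m', β m' * q n m')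

noncomputable def Tx {N M : ℕ} (p q : Fin N → Fin M → ℝ) (β : Fin M → ℝ) :
    Fin M → Fin M → ℝ :=
  fun j m => Ax p q β j m / (β m * ∑ n, p n m * q n m)

section layer

variable {N M : ℕ} (p q : Fin N → Fin M → ℝ) (β : Fin M → ℝ)

lemma Ax_nonneg (hp : ∀ i j, 0 < p i j) (hq0 : ∀ i j, 0 ≤ q i j) (hβ : ∀ m, 0 < β m)
    (j m : Fin M) : 0 ≤ Ax p q β j m := by
  refine Finset.sum_nonneg fun n _ => div_nonneg ?_ ?_
  · exact mul_nonneg (mul_nonneg (hβ j).le (hq0 n j))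
      (mul_nonneg (mul_nonneg (hβ m).le (hq0 n m)) (hp n m).le)
  · exact Finset.sum_nonneg fun m' _ => mul_nonneg (hβ m').le (hq0 n m')

lemma Ax_pos (hp : ∀ i j, 0 < p i j) (hq0 : ∀ i j, 0 ≤ q i j) (hβ : ∀ m, 0 < β m)
    (hW : ∀ i, 0 < ∑ m', β m' * q i m')
    {j m : Fin M} {k : Fin N} (hkj : 0 < q k j) (hkm : 0 < q k m) :
    0 < Ax p q β j m := by
  refine Finset.sum_pos' (fun n _ => div_nonneg (mul_nonneg (mul_nonneg (hβ j).le (hq0 n j))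
      (mul_nonneg (mul_nonneg (hβ m).le (hq0 n m)) (hp n m).le))
      (Finset.sum_nonneg fun m' _ => mul_nonneg (hβ m').le (hq0 n m'))) ⟨k, mem_univ k, ?_⟩
  exact div_pos (mul_pos (mul_pos (hβ j) hkj) (mul_pos (mul_pos (hβ m) hkm) (hp k m))) (hW k)

lemma Ax_colsum (hβ : ∀ m, 0 < β m) (hW : ∀ i, 0 < ∑ m', β m' * q i m') (m : Fin M) :
    ∑ j, Ax p q β j m = β m * ∑ n, p n m * q n m := by
  unfold Ax
  rw [Finset.sum_comm, Finset.mul_sum]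
  refine Finset.sum_congr rfl fun n _ => ?_
  calc ∑ j, β j * q n j * (β m * q n m * p n m) / (∑ m', β m' * q n m')
      = ((β m * q n m * p n m) / (∑ m', β m' * q n m')) * ∑ j, β j * q n j := by
        rw [Finset.mul_sum]; exact Finset.sum_congr rfl fun j _ => by ring
    _ = β m * (p n m * q n m) := by
        rw [div_mul_cancel₀ _ (hW n).ne']; ring

lemma Tx_nonneg (hp : ∀ i j, 0 < p i j) (hq0 : ∀ i j, 0 ≤ q i j) (hβ : ∀ m, 0 < β m)
    (hV : ∀ m, 0 < ∑ n, p n m * q n m) (j m : Fin M) : 0 ≤ Tx p q β j m :=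
  div_nonneg (Ax_nonneg p q β hp hq0 hβ j m) (mul_pos (hβ m) (hV m)).le

lemma Tx_colsum (hβ : ∀ m, 0 < β m) (hW : ∀ i, 0 < ∑ m', β m' * q i m')
    (hV : ∀ m, 0 < ∑ n, p n m * q n m) (m : Fin M) : ∑ j, Tx p q β j m = 1 := by
  unfold Tx
  rw [← Finset.sum_div, Ax_colsum p q β hβ hW m, div_self (mul_pos (hβ m) (hV m)).ne']

lemma Ax_key (hW : ∀ i, 0 < ∑ m', β m' * q i m') (j : Fin M) (x : Fin M → ℝ) :
    ∑ m, Ax p q β j m * x m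
      = β j * ∑ n, q n j * ((∑ m, β m * q n m * p n m * x m) / (∑ m', β m' * q n m')) := by
  unfold Ax
  rw [Finset.mul_sum]
  simp only [Finset.sum_mul]
  rw [Finset.sum_comm]
  refine Finset.sum_congr rfl fun n _ => ?_
  calc ∑ m, β j * q n j * (β m * q n m * p n m) / (∑ m', β m' * q n m') * x m
      = (β j * (q n j / (∑ m', β m' * q n m'))) * ∑ m, β m * q n m * p n m * x m := by
        rw [Finset.mul_sum]; exact Finset.sum_congr rfl fun m _ => by ring
    _ = β j * (q n j * ((∑ m, β m * q n m * p n m * x m) / (∑ m', β m' * q n m'))) := by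
        ring

lemma Tx_mul (hβ : ∀ m, 0 < β m) (hV : ∀ m, 0 < ∑ n, p n m * q n m)
    (j m : Fin M) (x : ℝ) :
    Tx p q β j m * (β m * (∑ n, p n m * q n m) * x) = Ax p q β j m * x := by
  unfold Tx
  have hb : (β m * ∑ n, p n m * q n m) ≠ 0 := (mul_pos (hβ m) (hV m)).ne'
  rw [div_mul_eq_mul_div, div_eq_iff hb]
  ring

end layer

/-- Connectedness of the quantity matrix `q`. -/
def QConnected {N M : ℕ} (q : Fin N → Fin M → ℝ) : Prop :=
  ∀ J : Finset (Fin M), J.Nonempty → J ≠ Finset.univ →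
    ∃ j ∈ J, ∃ l ∉ J, ∃ k, 0 < q k j ∧ 0 < q k l

/-- `(PPP, P)` solves the generalized Geary–Khamis system with country weights `β`. -/
def GGKSol {N M : ℕ} (p q : Fin N → Fin M → ℝ) (β : Fin M → ℝ)
    (PPP : Fin M → ℝ) (P : Fin N → ℝ) : Prop :=
  (∀ j, (PPP j)⁻¹ = ∑ n, (p n j * q n j / ∑ n', p n' j * q n' j) * (P n / p n j)) ∧
  (∀ i, P i = ∑ m, (β m * q i m / ∑ m', β m' * q i m') * (p i m / PPP m))

section soleigen

variable {N M : ℕ} (p q : Fin N → Fin M → ℝ) (β : Fin M → ℝ)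

lemma sol_to_eigen (hp : ∀ i j, 0 < p i j)
    (hV : ∀ m, 0 < ∑ n, p n m * q n m) (hW : ∀ i, 0 < ∑ m', β m' * q i m')
    (hβ : ∀ m, 0 < β m)
    (PPP : Fin M → ℝ) (P : Fin N → ℝ) (hPPP : ∀ j, 0 < PPP j)
    (hsol : GGKSol p q β PPP P) :
    (∀ i, P i = (∑ m, β m * q i m * p i m * (PPP m)⁻¹) / (∑ m', β m' * q i m')) ∧
    (∀ j, ∑ m, Tx p q β j m * (β m * (∑ n, p n m * q n m) * (PPP m)⁻¹)
        = β j * (∑ n, p n j * q n j) * (PPP j)⁻¹) := by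
  obtain ⟨h1, h2⟩ := hsol
  have hP : ∀ i, P i = (∑ m, β m * q i m * p i m * (PPP m)⁻¹) / (∑ m', β m' * q i m') := by
    intro i
    rw [h2 i, Finset.sum_div]
    refine Finset.sum_congr rfl fun m _ => ?_
    rw [div_eq_mul_inv (p i m) (PPP m)]
    ring
  refine ⟨hP, fun j => ?_⟩
  have step1 : (∑ n, p n j * q n j) * (PPP j)⁻¹ = ∑ n, q n j * P n := by
    rw [h1 j, Finset.mul_sum]
    refine Finset.sum_congr rfl fun n _ => ?_
    have hpn := (hp n j).ne'
    have hVn := (hV j).ne'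
    field_simp
  calc ∑ m, Tx p q β j m * (β m * (∑ n, p n m * q n m) * (PPP m)⁻¹)
      = ∑ m, Ax p q β j m * (PPP m)⁻¹ :=
        Finset.sum_congr rfl fun m _ => Tx_mul p q β hβ hV j m _
    _ = β j * ∑ n, q n j * ((∑ m, β m * q n m * p n m * (PPP m)⁻¹) / (∑ m', β m' * q n m')) :=
        Ax_key p q β hW j _
    _ = β j * ∑ n, q n j * P n := by
        refine congrArg _ (Finset.sum_congr rfl fun n _ => ?_)
        rw [hP n]
    _ = β j * ((∑ n, p n j * q n j) * (PPP j)⁻¹) := by rw [step1]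
    _ = β j * (∑ n, p n j * q n j) * (PPP j)⁻¹ := by ring

lemma eigen_to_sol (hp : ∀ i j, 0 < p i j) (hq0 : ∀ i j, 0 ≤ q i j)
    (hqrow : ∀ i, ∃ j, 0 < q i j)
    (hV : ∀ m, 0 < ∑ n, p n m * q n m) (hW : ∀ i, 0 < ∑ m', β m' * q i m')
    (hβ : ∀ m, 0 < β m)
    (z : Fin M → ℝ) (hz : ∀ m, 0 < z m)
    (heig : ∀ j, ∑ m, Tx p q β j m * z m = z j) :
    ∃ (PPP : Fin M → ℝ) (P : Fin N → ℝ),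
      (∀ j, 0 < PPP j) ∧ (∀ i, 0 < P i) ∧ GGKSol p q β PPP P := by
  set PPP : Fin M → ℝ := fun m => β m * (∑ n, p n m * q n m) / z m with hPPPdef
  have hPPP : ∀ m, 0 < PPP m := fun m => div_pos (mul_pos (hβ m) (hV m)) (hz m)
  have hinv : ∀ m, β m * (∑ n, p n m * q n m) * (PPP m)⁻¹ = z m := by
    intro m
    simp only [hPPPdef]
    rw [inv_div, mul_div_assoc', mul_comm, mul_div_assoc,
      div_self (mul_pos (hβ m) (hV m)).ne', mul_one]
  set P : Fin N → ℝ :=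
    fun i => (∑ m, β m * q i m * p i m * (PPP m)⁻¹) / (∑ m', β m' * q i m') with hPdef
  have hP : ∀ i, 0 < P i := by
    intro i
    obtain ⟨m, hm⟩ := hqrow i
    refine div_pos (Finset.sum_pos' (fun m' _ => ?_) ⟨m, mem_univ m, ?_⟩) (hW i)
    · exact mul_nonneg (mul_nonneg (mul_nonneg (hβ m').le (hq0 i m')) (hp i m').le)
        (inv_pos.mpr (hPPP m')).le
    · exact mul_pos (mul_pos (mul_pos (hβ m) hm) (hp i m)) (inv_pos.mpr (hPPP m))
  refine ⟨PPP, P, hPPP, hP, ?_, ?_⟩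
  · -- first GGK equation
    intro j
    have key : ∑ n, q n j * P n = (∑ n, p n j * q n j) * (PPP j)⁻¹ := by
      have h1 : β j * ∑ n, q n j * P n = β j * ((∑ n, p n j * q n j) * (PPP j)⁻¹) := by
        calc β j * ∑ n, q n j * P n
            = β j * ∑ n, q n j *
                ((∑ m, β m * q n m * p n m * (PPP m)⁻¹) / (∑ m', β m' * q n m')) := rfl
          _ = ∑ m, Ax p q β j m * (PPP m)⁻¹ := (Ax_key p q β hW j _).symm
          _ = ∑ m, Tx p q β j m * (β m * (∑ n, p n m * q n m) * (PPP m)⁻¹) :=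
              (Finset.sum_congr rfl fun m _ => (Tx_mul p q β hβ hV j m _)).symm
          _ = ∑ m, Tx p q β j m * z m := by
              refine Finset.sum_congr rfl fun m _ => ?_
              rw [hinv m]
          _ = z j := heig j
          _ = β j * (∑ n, p n j * q n j) * (PPP j)⁻¹ := (hinv j).symm
          _ = β j * ((∑ n, p n j * q n j) * (PPP j)⁻¹) := by ring
      exact mul_left_cancel₀ (hβ j).ne' h1
    rw [show (∑ n, (p n j * q n j / ∑ n', p n' j * q n' j) * (P n / p n j))
        = (∑ n, q n j * P n) / (∑ n', p n' j * q n' j) from ?_]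
    · rw [key, mul_comm, mul_div_assoc, div_self (hV j).ne', mul_one]
    · rw [Finset.sum_div]
      refine Finset.sum_congr rfl fun n _ => ?_
      have hpn := (hp n j).ne'
      have hVn := (hV j).ne'
      field_simp
  · -- second GGK equation
    intro i
    rw [show P i = (∑ m, β m * q i m * p i m * (PPP m)⁻¹) / (∑ m', β m' * q i m') from rfl,
      Finset.sum_div]
    refine Finset.sum_congr rfl fun m _ => ?_
    rw [div_eq_mul_inv (p i m) (PPP m)]
    ring

end soleigen
theorem stmt7 {N M : ℕ} (hN : 0 < N) (hM : 0 < M)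
    (p q : Fin N → Fin M → ℝ) (β : Fin M → ℝ)
    (hp : ∀ i j, 0 < p i j)
    (hq0 : ∀ i j, 0 ≤ q i j)
    (hqrow : ∀ i, ∃ j, 0 < q i j)
    (hqcol : ∀ j, ∃ i, 0 < q i j)
    (hβ : ∀ m, 0 < β m) :
    ((∃ (PPP : Fin M → ℝ) (P : Fin N → ℝ),
        (∀ j, 0 < PPP j) ∧ (∀ i, 0 < P i) ∧ GGKSol p q β PPP P) ∧
      (∀ (PPP PPP' : Fin M → ℝ) (P P' : Fin N → ℝ),
        (∀ j, 0 < PPP j) → (∀ i, 0 < P i) → GGKSol p q β PPP P →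
        (∀ j, 0 < PPP' j) → (∀ i, 0 < P' i) → GGKSol p q β PPP' P' →
        ∃ γ : ℝ, 0 < γ ∧ (∀ j, PPP' j = γ * PPP j) ∧ (∀ i, P' i = γ⁻¹ * P i)))
    ↔ QConnected q := by
  classical
  have hV : ∀ m, 0 < ∑ n, p n m * q n m := by
    intro m; obtain ⟨i, hi⟩ := hqcol m
    exact Finset.sum_pos' (fun n _ => mul_nonneg (hp n m).le (hq0 n m))
      ⟨i, mem_univ i, mul_pos (hp i m) hi⟩
  have hW : ∀ i, 0 < ∑ m', β m' * q i m' := by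
    intro i; obtain ⟨m, hm⟩ := hqrow i
    exact Finset.sum_pos' (fun m' _ => mul_nonneg (hβ m').le (hq0 i m'))
      ⟨m, mem_univ m, mul_pos (hβ m) hm⟩
  constructor
  · rintro ⟨⟨PPP, P, hPPP, hP, hsol⟩, huniq⟩
    intro J hJne hJuniv
    by_contra hnc
    push_neg at hnc
    set K : Fin N → Prop := fun i => ∃ j ∈ J, 0 < q i j with hKdef
    have hsep : ∀ i (j : Fin M), 0 < q i j → (K i ↔ j ∈ J) := by
      intro i j hij
      constructor
      · rintro ⟨j', hj', hij'⟩
        by_contra hjJ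
        exact absurd hij (not_lt.mpr (hnc j' hj' j hjJ i hij'))
      · intro hj; exact ⟨j, hj, hij⟩
    set PPP' : Fin M → ℝ := fun j => if j ∈ J then 2 * PPP j else PPP j with hPPP'def
    set P' : Fin N → ℝ := fun i => if K i then P i / 2 else P i with hP'def
    have hPPP'pos : ∀ j, 0 < PPP' j := by
      intro j; simp only [hPPP'def]; split
      · linarith [hPPP j]
      · exact hPPP j
    have hP'pos : ∀ i, 0 < P' i := by
      intro i; simp only [hP'def]; split
      · linarith [hP i]
      · exact hP i
    have h1 := hsol.1
    have h2 := hsol.2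
    have hsol' : GGKSol p q β PPP' P' := by
      refine ⟨fun j => ?_, fun i => ?_⟩
      · by_cases hj : j ∈ J
        · have lhs : (PPP' j)⁻¹ = (PPP j)⁻¹ * (2:ℝ)⁻¹ := by
            simp only [hPPP'def, if_pos hj, mul_inv]; ring
          rw [lhs, h1 j, Finset.sum_mul]
          refine Finset.sum_congr rfl fun n _ => ?_
          rcases (hq0 n j).lt_or_eq with hq | hq
          · have hKn : K n := ⟨j, hj, hq⟩
            simp only [hP'def, if_pos hKn]
            simp only [div_eq_mul_inv, mul_inv]
            ring
          · rw [← hq]; simp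
        · simp only [hPPP'def, if_neg hj]
          rw [h1 j]
          refine Finset.sum_congr rfl fun n _ => ?_
          rcases (hq0 n j).lt_or_eq with hq | hq
          · have hKn : ¬ K n := fun hk => hj ((hsep n j hq).mp hk)
            simp only [hP'def, if_neg hKn]
          · rw [← hq]; simp
      · by_cases hi : K i
        · have lhs : P' i = P i * (2:ℝ)⁻¹ := by
            simp only [hP'def, if_pos hi]; ring
          rw [lhs, h2 i, Finset.sum_mul]
          refine Finset.sum_congr rfl fun m _ => ?_
          rcases (hq0 i m).lt_or_eq with hq | hq
          · have hmJ : m ∈ J := (hsep i m hq).mp hi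
            simp only [hPPP'def, if_pos hmJ]
            simp only [div_eq_mul_inv, mul_inv]
            ring
          · rw [← hq]; simp
        · simp only [hP'def, if_neg hi]
          rw [h2 i]
          refine Finset.sum_congr rfl fun m _ => ?_
          rcases (hq0 i m).lt_or_eq with hq | hq
          · have hmJ : m ∉ J := fun hm => hi ((hsep i m hq).mpr hm)
            simp only [hPPP'def, if_neg hmJ]
          · rw [← hq]; simp
    obtain ⟨γ, hγ, hγ1, hγ2⟩ := huniq PPP PPP' P P' hPPP hP hsol hPPP'pos hP'pos hsol'
    obtain ⟨j0, hj0⟩ := hJne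
    have e1 : 2 * PPP j0 = γ * PPP j0 := by
      have h := hγ1 j0
      simpa [hPPP'def, if_pos hj0] using h
    have hγa : (2:ℝ) = γ := mul_right_cancel₀ (hPPP j0).ne' e1
    obtain ⟨l0, hl0⟩ : ∃ l0, l0 ∉ J := by
      by_contra hcon; push_neg at hcon
      exact hJuniv (Finset.eq_univ_iff_forall.mpr hcon)
    have e2 : (1:ℝ) * PPP l0 = γ * PPP l0 := by
      have h := hγ1 l0
      simp only [hPPP'def, if_neg hl0] at h
      linarith
    have hγb : (1:ℝ) = γ := mul_right_cancel₀ (hPPP l0).ne' e2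
    linarith
  · intro hc
    have hT0 := Tx_nonneg p q β hp hq0 hβ hV
    have hcol := Tx_colsum p q β hβ hW hV
    have hirr : ∀ J : Finset (Fin M), J.Nonempty → J ≠ Finset.univ →
        ∃ j ∈ J, ∃ l, l ∉ J ∧ 0 < Tx p q β j l := by
      intro J hne huniv
      obtain ⟨j, hj, l, hl, k, hkj, hkl⟩ := hc J hne huniv
      exact ⟨j, hj, l, hl,
        div_pos (Ax_pos p q β hp hq0 hβ hW hkj hkl) (mul_pos (hβ l) (hV l))⟩
    obtain ⟨z, hzpos, hzeig⟩ := stoch_exists hM (Tx p q β) hT0 hcol hirr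
    constructor
    · exact eigen_to_sol p q β hp hq0 hqrow hV hW hβ z hzpos hzeig
    · intro PPP PPP' P P' hPPP hP hsol hPPP' hP' hsol'
      obtain ⟨hPf, heig⟩ := sol_to_eigen p q β hp hV hW hβ PPP P hPPP hsol
      obtain ⟨hPf', heig'⟩ := sol_to_eigen p q β hp hV hW hβ PPP' P' hPPP' hsol'
      obtain ⟨c, hcpos, hcz⟩ := stoch_unique hM (Tx p q β) hT0 hirr
        (fun m => β m * (∑ n, p n m * q n m) * (PPP m)⁻¹)
        (fun m => β m * (∑ n, p n m * q n m) * (PPP' m)⁻¹)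
        (fun m => mul_pos (mul_pos (hβ m) (hV m)) (inv_pos.mpr (hPPP m)))
        (fun m => mul_pos (mul_pos (hβ m) (hV m)) (inv_pos.mpr (hPPP' m)))
        heig heig'
      have hinv' : ∀ m, (PPP' m)⁻¹ = c * (PPP m)⁻¹ := by
        intro m
        have h := hcz m
        have ha : (β m * (∑ n, p n m * q n m)) ≠ 0 := (mul_pos (hβ m) (hV m)).ne'
        apply mul_left_cancel₀ ha
        rw [show β m * (∑ n, p n m * q n m) * (c * (PPP m)⁻¹)
            = c * (β m * (∑ n, p n m * q n m) * (PPP m)⁻¹) from by ring]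
        exact h
      refine ⟨c⁻¹, inv_pos.mpr hcpos, fun j => ?_, fun i => ?_⟩
      · rw [show PPP' j = ((PPP' j)⁻¹)⁻¹ from (inv_inv _).symm, hinv' j, mul_inv, inv_inv]
      · rw [inv_inv, hPf' i, hPf i, ← mul_div_assoc, Finset.mul_sum]
        congr 1
        refine Finset.sum_congr rfl fun m _ => ?_
        rw [hinv' m]; ring
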